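/- Let W ⊆ ℝ be a set that is well-ordered by the usual order and contains none of its limit points, and let g₀ : Wⁿ → ℝ be a nondecreasing function (monotone in each coordinate) that is bounded on precompact sets. Then there exists a continuous nondecreasing function g : ℝⁿ → ℝ whose restriction to Wⁿ equals g₀. -/

import Mathlib

open Set Filter Topology MeasureTheory

open Classical in
noncomputable def cE (W : Set ℝ) (x : ℝ) : ℝ :=
  if (W ∩ Set.Ioi x).Nonempty then sInf (W ∩ Set.Ioi x) else x + 1

open Classical in
noncomputable def cS (W : Set ℝ) (x : ℝ) : ℝ :=
  if (W ∩ Set.Iic x).Nonempty then sSup (W ∩ Set.Iic x) else x - 1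

noncomputable def sw (W : Set ℝ) (x t : ℝ) : ℝ :=
  min (x + t * (cE W x - cS W x)) (cE W x)

variable {W : Set ℝ}

lemma cE_isLeast (hW : W.IsWF) {x : ℝ} (h : (W ∩ Set.Ioi x).Nonempty) :
    IsLeast (W ∩ Set.Ioi x) (cE W x) := by
  have hwf : (W ∩ Set.Ioi x).IsWF := hW.mono inter_subset_left
  have hL : IsLeast (W ∩ Set.Ioi x) (hwf.min h) :=
    ⟨hwf.min_mem h, fun b hb => hwf.min_le h hb⟩
  rwa [cE, if_pos h, hL.csInf_eq]

lemma cE_mem (hW : W.IsWF) {x : ℝ} (h : (W ∩ Set.Ioi x).Nonempty) : cE W x ∈ W :=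
  (cE_isLeast hW h).1.1

lemma cE_gt (hW : W.IsWF) (x : ℝ) : x < cE W x := by
  by_cases h : (W ∩ Set.Ioi x).Nonempty
  · exact (cE_isLeast hW h).1.2
  · rw [cE, if_neg h]; linarith

lemma cE_le (hW : W.IsWF) {x v : ℝ} (hv : v ∈ W) (hx : x < v) : cE W x ≤ v :=
  (cE_isLeast hW ⟨v, hv, hx⟩).2 ⟨hv, hx⟩

lemma cE_gap (hW : W.IsWF) {x v : ℝ} (hv : v ∈ W) (h : v < cE W x) : v ≤ x := by
  by_contra hc
  exact absurd (cE_le hW hv (not_le.1 hc)) (not_le.2 h)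

lemma cE_empty {x : ℝ} (h : ¬ (W ∩ Set.Ioi x).Nonempty) : cE W x = x + 1 := by
  rw [cE, if_neg h]

lemma cE_mono (hW : W.IsWF) : Monotone (cE W) := by
  intro x₁ x₂ h
  by_cases h2 : (W ∩ Set.Ioi x₂).Nonempty
  · have h1 : (W ∩ Set.Ioi x₁).Nonempty :=
      h2.mono (inter_subset_inter_right _ (Ioi_subset_Ioi h))
    rw [cE, if_pos h1, cE, if_pos h2]
    exact csInf_le_csInf ⟨x₁, fun v hv => le_of_lt hv.2⟩ h2
      (inter_subset_inter_right _ (Ioi_subset_Ioi h))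
  · by_cases h1 : (W ∩ Set.Ioi x₁).Nonempty
    · have : cE W x₁ ≤ x₂ := by
        have hm := cE_mem hW h1
        by_contra hc
        exact h2 ⟨cE W x₁, hm, not_le.1 hc⟩
      rw [cE_empty h2]; linarith
    · rw [cE, if_neg h1, cE, if_neg h2]; linarith

lemma cS_le (x : ℝ) : cS W x ≤ x := by
  by_cases h : (W ∩ Set.Iic x).Nonempty
  · rw [cS, if_pos h]; exact csSup_le h fun v hv => hv.2
  · rw [cS, if_neg h]; linarith

lemma cS_lt_cE (hW : W.IsWF) (x : ℝ) : cS W x < cE W x :=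
  lt_of_le_of_lt (cS_le x) (cE_gt hW x)

lemma cS_ge {x v : ℝ} (hv : v ∈ W) (hvx : v ≤ x) : v ≤ cS W x := by
  have h : (W ∩ Set.Iic x).Nonempty := ⟨v, hv, hvx⟩
  rw [cS, if_pos h]
  exact le_csSup ⟨x, fun u hu => hu.2⟩ ⟨hv, hvx⟩

lemma cS_node {w : ℝ} (hw : w ∈ W) : cS W w = w :=
  le_antisymm (cS_le w) (cS_ge hw le_rfl)

lemma cE_congr {x z : ℝ} (h : W ∩ Set.Ioi x = W ∩ Set.Ioi z)
    (hne : (W ∩ Set.Ioi z).Nonempty) : cE W x = cE W z := by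
  rw [cE, cE, h, if_pos hne, if_pos hne]

lemma cS_congr {x z : ℝ} (h : W ∩ Set.Iic x = W ∩ Set.Iic z)
    (hne : (W ∩ Set.Iic z).Nonempty) : cS W x = cS W z := by
  rw [cS, cS, h, if_pos hne, if_pos hne]

lemma cS_empty {x : ℝ} (h : ¬ (W ∩ Set.Iic x).Nonempty) : cS W x = x - 1 := by
  rw [cS, if_neg h]

lemma sw_ge (hW : W.IsWF) {x t : ℝ} (ht : 0 ≤ t) : x ≤ sw W x t := by
  have h1 := cS_lt_cE hW x
  have h2 := cE_gt hW x
  exact le_min (by nlinarith) h2.le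

lemma sw_le (x t : ℝ) : sw W x t ≤ cE W x := min_le_right _ _

lemma sw_mono_t (hW : W.IsWF) (x : ℝ) : Monotone (sw W x) := by
  intro t₁ t₂ h
  have h1 := cS_lt_cE hW x
  exact min_le_min (by nlinarith) le_rfl

lemma sw_node_lt (hW : W.IsWF) {w t : ℝ} (hw : w ∈ W) (ht : t < 1) :
    sw W w t < cE W w := by
  have h2 := cE_gt hW w
  rw [sw, cS_node hw]
  exact min_lt_iff.2 (Or.inl (by nlinarith))

lemma le_iff_of_lt_cE (hW : W.IsWF) {v x y : ℝ} (hv : v ∈ W) (hxy : x ≤ y)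
    (hy : y < cE W x) : v ≤ y ↔ v ≤ x :=
  ⟨fun h => cE_gap hW hv (lt_of_le_of_lt h hy), fun h => h.trans hxy⟩

lemma sw_mono_x (hW : W.IsWF) {t x₁ x₂ : ℝ} (ht0 : 0 ≤ t) (ht1 : t ≤ 1)
    (h : x₁ ≤ x₂) : sw W x₁ t ≤ sw W x₂ t := by
  rcases le_or_gt (cE W x₁) x₂ with hc | hc
  · exact le_trans (sw_le _ _) (le_trans hc (sw_ge hW ht0))
  · -- x₂ < cE W x₁ : same cell
    have setE : W ∩ Set.Ioi x₁ = W ∩ Set.Ioi x₂ := by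
      ext u
      constructor
      · rintro ⟨hu, hu1⟩
        refine ⟨hu, ?_⟩
        by_contra hc2
        exact absurd (cE_gap hW hu (lt_of_le_of_lt (not_lt.1 hc2) hc)) (not_le.2 hu1)
      · rintro ⟨hu, hu2⟩
        exact ⟨hu, lt_of_le_of_lt h hu2⟩
    have setS : W ∩ Set.Iic x₁ = W ∩ Set.Iic x₂ := by
      ext u
      constructor
      · rintro ⟨hu, hu1⟩; exact ⟨hu, hu1.trans h⟩
      · rintro ⟨hu, hu2⟩
        refine ⟨hu, ?_⟩
        exact cE_gap hW hu (lt_of_le_of_lt hu2 hc)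
    by_cases hne : (W ∩ Set.Ioi x₁).Nonempty
    · have eE : cE W x₂ = cE W x₁ := cE_congr setE.symm hne
      by_cases hns : (W ∩ Set.Iic x₁).Nonempty
      · have eS : cS W x₂ = cS W x₁ := cS_congr setS.symm hns
        rw [sw, sw, eE, eS]
        exact min_le_min (by linarith) le_rfl
      · have e1 : cS W x₁ = x₁ - 1 := cS_empty hns
        have e2 : cS W x₂ = x₂ - 1 := cS_empty (setS ▸ hns)
        rw [sw, sw, eE, e1, e2]
        exact min_le_min (by nlinarith) le_rfl
    · have e1 : cE W x₁ = x₁ + 1 := cE_empty hne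
      have e2 : cE W x₂ = x₂ + 1 := cE_empty (setE ▸ hne)
      by_cases hns : (W ∩ Set.Iic x₁).Nonempty
      · have eS : cS W x₂ = cS W x₁ := cS_congr setS.symm hns
        rw [sw, sw, e1, e2, eS]
        exact min_le_min (by nlinarith) (by linarith)
      · have f1 : cS W x₁ = x₁ - 1 := cS_empty hns
        have f2 : cS W x₂ = x₂ - 1 := cS_empty (setS ▸ hns)
        rw [sw, sw, e1, e2, f1, f2]
        exact min_le_min (by nlinarith) (by linarith)

lemma cS_sSup {x : ℝ} (h : (W ∩ Set.Iic x).Nonempty) : cS W x = sSup (W ∩ Set.Iic x) := by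
  rw [cS, if_pos h]

lemma cS_mono (hW : W.IsWF) : Monotone (cS W) := by
  intro x₁ x₂ h
  by_cases h1 : (W ∩ Set.Iic x₁).Nonempty
  · have h2 : (W ∩ Set.Iic x₂).Nonempty :=
      h1.mono (inter_subset_inter_right _ (Iic_subset_Iic.2 h))
    rw [cS, if_pos h1, cS, if_pos h2]
    exact csSup_le_csSup ⟨x₂, fun u hu => hu.2⟩ h1
      (inter_subset_inter_right _ (Iic_subset_Iic.2 h))
  · by_cases h2 : (W ∩ Set.Iic x₂).Nonempty
    · obtain ⟨u, hu, hu2⟩ := h2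
      have hux : x₁ < u := by
        by_contra hc
        exact h1 ⟨u, hu, not_lt.1 hc⟩
      have := cS_ge hu hu2
      rw [cS_empty h1]; linarith
    · rw [cS_empty h1, cS_empty h2]; linarith

lemma isolation (hWlim : ∀ p : ℝ, p ∈ closure (W \ {p}) → p ∉ W) {w : ℝ} (hw : w ∈ W) :
    ∃ δ > 0, ∀ u ∈ W, |u - w| < δ → u = w := by
  have h2 : w ∉ closure (W \ {w}) := fun hc => (hWlim w hc) hw
  rw [Metric.mem_closure_iff] at h2
  push_neg at h2
  obtain ⟨ε, hε, hb⟩ := h2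
  refine ⟨ε, hε, fun u hu hd => ?_⟩
  by_contra hne
  have := hb u ⟨hu, hne⟩
  rw [Real.dist_eq, abs_sub_comm] at this
  linarith

lemma helper_cE_eq (hW : W.IsWF) {x w : ℝ} (hwW : w ∈ W) (hxw : x < w)
    (hgap : ∀ u ∈ W, x < u → w ≤ u) : cE W x = w :=
  le_antisymm (cE_le hW hwW hxw) (hgap _ (cE_mem hW ⟨w, hwW, hxw⟩) (cE_gt hW x))

/-- key lower lemma -/
lemma L_sw (hW : W.IsWF) (hWlim : ∀ p : ℝ, p ∈ closure (W \ {p}) → p ∉ W)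
    {t z v : ℝ} (ht0 : 0 < t) (ht1 : t < 1)
    (htau : z + t * (cE W z - cS W z) ≠ cE W z)
    (hv : v ∈ W) (hle : v ≤ sw W z t) :
    ∀ᶠ x in 𝓝 z, v ≤ sw W x t := by
  rcases lt_trichotomy v z with hvz | hvz | hvz
  · filter_upwards [Ioi_mem_nhds hvz] with x hx
    exact le_trans (le_of_lt hx) (sw_ge hW ht0.le)
  · -- v = z ∈ W
    subst hvz
    obtain ⟨δ₀, hδ₀, hiso⟩ := isolation hWlim hv
    have hδ : 0 < min δ₀ (t * min δ₀ 1) :=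
      lt_min hδ₀ (mul_pos ht0 (lt_min hδ₀ one_pos))
    filter_upwards [Metric.ball_mem_nhds v hδ] with x hx
    rw [Metric.mem_ball, Real.dist_eq] at hx
    rcases le_or_gt v x with hzx | hzx
    · exact le_trans hzx (sw_ge hW ht0.le)
    · have hx1 : v - x < min δ₀ (t * min δ₀ 1) := by
        rw [abs_sub_lt_iff] at hx; exact hx.2
      have hEx : cE W x = v := by
        refine helper_cE_eq hW hv hzx (fun u hu hxu => ?_)
        by_contra hc
        have hune : u ≠ v := ne_of_lt (not_le.1 hc)
        have : |u - v| < δ₀ := by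
          rw [abs_sub_lt_iff]
          constructor <;> [skip; skip] <;>
            [linarith [not_le.1 hc]; nlinarith [lt_of_lt_of_le hx1 (min_le_left _ _)]]
        exact hune (hiso u hu this)
      have hSx : cS W x ≤ v - min δ₀ 1 := by
        by_cases hns : (W ∩ Set.Iic x).Nonempty
        · rw [cS, if_pos hns]
          apply csSup_le hns
          rintro u ⟨hu, hux⟩
          have hux' : u ≤ x := hux
          have hune : u ≠ v := by intro h; rw [h] at hux'; linarith
          have hge : ¬ |u - v| < δ₀ := fun hd => hune (hiso u hu hd)
          rw [abs_sub_lt_iff, not_and_or, not_lt, not_lt] at hge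
          rcases hge with h | h
          · linarith
          · linarith [min_le_left δ₀ (1:ℝ)]
        · rw [cS_empty hns]
          have := min_le_right δ₀ (1:ℝ); linarith
      have harg : v ≤ x + t * (cE W x - cS W x) := by
        rw [hEx]
        have h2 : v - x < t * min δ₀ 1 := lt_of_lt_of_le hx1 (min_le_right _ _)
        nlinarith [ht0]
      rw [sw]
      refine le_min harg ?_
      rw [hEx]
  · -- v > z
    have hne : (W ∩ Set.Ioi z).Nonempty := ⟨v, hv, hvz⟩
    have hEW : cE W z ∈ W := cE_mem hW hne
    have hvE : cE W z ≤ v := cE_le hW hv hvz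
    have hEv : v = cE W z := le_antisymm (le_trans hle (sw_le z t)) hvE
    have harg : cE W z ≤ z + t * (cE W z - cS W z) :=
      le_trans (hEv ▸ hle) (min_le_left _ _)
    have hstrict : cE W z < z + t * (cE W z - cS W z) :=
      lt_of_le_of_ne harg (fun h => htau h.symm)
    have hES : cS W z < cE W z := cS_lt_cE hW z
    have hSz : cS W z < z := by nlinarith
    have hEz : z < cE W z := cE_gt hW z
    have hγ : 0 < (z + t * (cE W z - cS W z) - cE W z) / 2 := by linarith
    have hδ : 0 < min (min (z - cS W z) (cE W z - z))
        ((z + t * (cE W z - cS W z) - cE W z) / 2) :=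
      lt_min (lt_min (by linarith) (by linarith)) hγ
    filter_upwards [Metric.ball_mem_nhds z hδ] with x hx
    rw [Metric.mem_ball, Real.dist_eq] at hx
    have hxS : cS W z < x := by
      have h1 := lt_of_lt_of_le hx (le_trans (min_le_left _ _) (min_le_left _ _))
      rw [abs_sub_lt_iff] at h1; linarith [h1.2]
    have hxE : x < cE W z := by
      have h1 := lt_of_lt_of_le hx (le_trans (min_le_left _ _) (min_le_right _ _))
      rw [abs_sub_lt_iff] at h1; linarith [h1.1]
    have hgapb : ∀ u ∈ W, u ≤ z → u ≤ cS W z := fun u hu h => cS_ge hu h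
    have hEx : cE W x = cE W z := by
      refine helper_cE_eq hW hEW hxE (fun u hu hxu => ?_)
      rcases le_or_gt u z with h | h
      · exact absurd hxu (not_lt.2 (le_trans (hgapb u hu h) hxS.le))
      · exact cE_le hW hu h
    have hSx : cS W x ≤ cS W z + |x - z| := by
      by_cases hns : (W ∩ Set.Iic x).Nonempty
      · rw [cS, if_pos hns]
        apply csSup_le hns
        rintro u ⟨hu, hux⟩
        rcases le_or_gt u z with h | h
        · linarith [hgapb u hu h, abs_nonneg (x - z)]
        · exact absurd hux (not_le.2 (lt_of_lt_of_le hxE (cE_le hW hu h)))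
      · have hnz : ¬ (W ∩ Set.Iic z).Nonempty := by
          rintro ⟨u, hu, huz⟩
          exact hns ⟨u, hu, le_of_lt (lt_of_le_of_lt (hgapb u hu huz) hxS)⟩
        rw [cS_empty hns, cS_empty hnz]
        have := le_abs_self (x - z); linarith
    have hd2 : |x - z| < (z + t * (cE W z - cS W z) - cE W z) / 2 :=
      lt_of_lt_of_le hx (min_le_right _ _)
    have harg2 : cE W z ≤ x + t * (cE W x - cS W x) := by
      rw [hEx]
      have habs1 : z - |x - z| ≤ x := by
        have := neg_abs_le (x - z); linarith
      nlinarith [abs_nonneg (x - z)]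
    rw [hEv, sw]
    exact le_min harg2 (le_of_eq hEx.symm)

/-- key upper lemma -/
lemma U_sw (hW : W.IsWF) (hWlim : ∀ p : ℝ, p ∈ closure (W \ {p}) → p ∉ W)
    {t z : ℝ} (ht0 : 0 < t) (ht1 : t < 1)
    (htau : z + t * (cE W z - cS W z) ≠ cE W z) :
    ∀ᶠ x in 𝓝 z, ∀ v ∈ W, v ≤ sw W x t → v ≤ sw W z t := by
  have hEz : z < cE W z := cE_gt hW z
  rcases lt_or_ge (z + t * (cE W z - cS W z)) (cE W z) with hlt | hge
  swap
  · -- sw z t = E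
    have hswz : sw W z t = cE W z := min_eq_right hge
    filter_upwards [Metric.ball_mem_nhds z (sub_pos.2 hEz)] with x hx v hv hvx
    rw [Metric.mem_ball, Real.dist_eq, abs_sub_lt_iff] at hx
    rcases le_or_gt v z with h | h
    · exact h.trans (sw_ge hW ht0.le)
    · have hEW : cE W z ∈ W := cE_mem hW ⟨v, hv, h⟩
      have hcEx : cE W x ≤ cE W z := by
        rcases le_or_gt x z with hxz | hxz
        · exact cE_mono hW hxz
        · exact cE_le hW hEW (by linarith [hx.1])
      rw [hswz]
      exact le_trans hvx (le_trans (sw_le x t) hcEx)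
  · -- sw z t < E : show eventually sw x t < E
    suffices hsuff : ∀ᶠ x in 𝓝 z, sw W x t < cE W z by
      filter_upwards [hsuff] with x hx v hv hvx
      rcases le_or_gt v z with h | h
      · exact h.trans (sw_ge hW ht0.le)
      · exact absurd (lt_of_le_of_lt hvx hx) (not_lt.2 (cE_le hW hv h))
    by_cases hzW : z ∈ W
    · -- α : z is a node
      have hSz : cS W z = z := cS_node hzW
      obtain ⟨δ₀, hδ₀, hiso⟩ := isolation hWlim hzW
      by_cases hne : (W ∩ Set.Ioi z).Nonempty
      · have hEW := cE_mem hW hne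
        have hδ : 0 < min δ₀ (min (cE W z - z) ((1 - t) * (cE W z - z))) :=
          lt_min hδ₀ (lt_min (by linarith) (by nlinarith))
        filter_upwards [Metric.ball_mem_nhds z hδ] with x hx
        rw [Metric.mem_ball, Real.dist_eq, abs_sub_lt_iff] at hx
        have hx1 : x - z < min δ₀ (min (cE W z - z) ((1 - t) * (cE W z - z))) := hx.1
        have hx2 : z - x < min δ₀ (min (cE W z - z) ((1 - t) * (cE W z - z))) := hx.2
        rcases lt_or_ge x z with hxz | hxz
        · have hEx : cE W x = z := by
            refine helper_cE_eq hW hzW hxz (fun u hu hxu => ?_)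
            by_contra hc
            have hune : u ≠ z := ne_of_lt (not_le.1 hc)
            refine hune (hiso u hu ?_)
            rw [abs_sub_lt_iff]
            constructor
            · linarith [not_le.1 hc, hδ₀]
            · have := min_le_left δ₀ (min (cE W z - z) ((1 - t) * (cE W z - z)))
              linarith
          calc sw W x t ≤ cE W x := sw_le x t
          _ = z := hEx
          _ < cE W z := hEz
        · have hxE : x < cE W z := by
            have h9 : min δ₀ (min (cE W z - z) ((1 - t) * (cE W z - z))) ≤ cE W z - z :=
              le_trans (min_le_right _ _) (min_le_left _ _)
            linarith
          have hEx : cE W x = cE W z := by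
            refine helper_cE_eq hW hEW hxE (fun u hu hxu => ?_)
            exact cE_le hW hu (lt_of_le_of_lt hxz hxu)
          have hSx : cS W x = z := by
            have hnsx : (W ∩ Set.Iic x).Nonempty := ⟨z, hzW, hxz⟩
            rw [cS_sSup hnsx]
            apply le_antisymm
            · apply csSup_le hnsx
              rintro u ⟨hu, hux⟩
              have hux' : u ≤ x := hux
              by_contra hc
              have huz : z < u := not_le.1 hc
              exact absurd hux' (not_le.2 (lt_of_lt_of_le hxE (cE_le hW hu huz)))
            · exact le_csSup ⟨x, fun u hu => hu.2⟩ ⟨hzW, hxz⟩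
          rw [sw, hEx, hSx]
          refine min_lt_iff.2 (Or.inl ?_)
          have hx3 : x - z < (1 - t) * (cE W z - z) :=
            lt_of_lt_of_le hx1 (le_trans (min_le_right _ _) (min_le_right _ _))
          nlinarith
      · -- empty above, E = z + 1
        have hE1 : cE W z = z + 1 := cE_empty hne
        have hδ : 0 < min δ₀ ((1 - t) / 2) := lt_min hδ₀ (by linarith)
        filter_upwards [Metric.ball_mem_nhds z hδ] with x hx
        rw [Metric.mem_ball, Real.dist_eq, abs_sub_lt_iff] at hx
        rcases lt_or_ge x z with hxz | hxz
        · have hEx : cE W x = z := by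
            refine helper_cE_eq hW hzW hxz (fun u hu hxu => ?_)
            by_contra hc
            have hune : u ≠ z := ne_of_lt (not_le.1 hc)
            refine hune (hiso u hu ?_)
            rw [abs_sub_lt_iff]
            constructor
            · linarith [not_le.1 hc, hδ₀]
            · linarith [hx.2, min_le_left δ₀ ((1-t)/2)]
          calc sw W x t ≤ cE W x := sw_le x t
          _ = z := hEx
          _ < cE W z := hEz
        · have hnex : ¬ (W ∩ Set.Ioi x).Nonempty := by
            rintro ⟨u, hu, hux⟩
            exact hne ⟨u, hu, lt_of_le_of_lt hxz hux⟩
          have hEx : cE W x = x + 1 := cE_empty hnex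
          have hSx : cS W x = z := by
            have hnsx : (W ∩ Set.Iic x).Nonempty := ⟨z, hzW, hxz⟩
            rw [cS_sSup hnsx]
            apply le_antisymm
            · apply csSup_le hnsx
              rintro u ⟨hu, hux⟩
              by_contra hc
              exact hne ⟨u, hu, not_le.1 hc⟩
            · exact le_csSup ⟨x, fun u hu => hu.2⟩ ⟨hzW, hxz⟩
          rw [sw, hEx, hSx, hE1]
          refine min_lt_iff.2 (Or.inl ?_)
          have hx3 : x - z < (1 - t) / 2 := lt_of_lt_of_le hx.1 (min_le_right _ _)
          nlinarith
    · -- z ∉ W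
      by_cases hlim : ∀ δ > 0, ∃ u, u ∈ W ∧ z - δ < u ∧ u ≤ z
      · -- β : limit from below
        have hSz : cS W z = z := by
          refine le_antisymm (cS_le z) ?_
          by_contra hc
          obtain ⟨u, hu, hu1, hu2⟩ := hlim (z - cS W z) (by linarith [not_le.1 hc])
          have := cS_ge hu hu2
          linarith
        by_cases hne : (W ∩ Set.Ioi z).Nonempty
        · have hEW := cE_mem hW hne
          have hδ : 0 < min (cE W z - z) ((1 - t) * (cE W z - z)) :=
            lt_min (by linarith) (by nlinarith)
          filter_upwards [Metric.ball_mem_nhds z hδ] with x hx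
          rw [Metric.mem_ball, Real.dist_eq, abs_sub_lt_iff] at hx
          rcases lt_or_ge x z with hxz | hxz
          · obtain ⟨u, hu, hu1, hu2⟩ := hlim (z - x) (by linarith)
            have hcEx : cE W x ≤ u := cE_le hW hu (by linarith)
            calc sw W x t ≤ cE W x := sw_le x t
            _ ≤ u := hcEx
            _ ≤ z := hu2
            _ < cE W z := hEz
          · have hxE : x < cE W z := by
              linarith [lt_of_lt_of_le hx.1 (min_le_left _ _)]
            have hEx : cE W x = cE W z := by
              refine helper_cE_eq hW hEW hxE (fun u hu hxu => ?_)
              exact cE_le hW hu (lt_of_le_of_lt hxz hxu)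
            have hSx : cS W x = z := by
              refine le_antisymm ?_ (hSz ▸ cS_mono hW hxz)
              obtain ⟨u₀, hu₀, _, hu₀2⟩ := hlim 1 one_pos
              have hnsx : (W ∩ Set.Iic x).Nonempty := ⟨u₀, hu₀, hu₀2.trans hxz⟩
              rw [cS_sSup hnsx]
              apply csSup_le hnsx
              rintro u ⟨hu, hux⟩
              have hux' : u ≤ x := hux
              by_contra hc
              exact absurd hux' (not_le.2 (lt_of_lt_of_le hxE (cE_le hW hu (not_le.1 hc))))
            rw [sw, hEx, hSx]
            refine min_lt_iff.2 (Or.inl ?_)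
            have hx3 : x - z < (1 - t) * (cE W z - z) :=
              lt_of_lt_of_le hx.1 (min_le_right _ _)
            nlinarith
        · have hE1 : cE W z = z + 1 := cE_empty hne
          have hδ : 0 < (1 - t) / 2 := by linarith
          filter_upwards [Metric.ball_mem_nhds z hδ] with x hx
          rw [Metric.mem_ball, Real.dist_eq, abs_sub_lt_iff] at hx
          rcases lt_or_ge x z with hxz | hxz
          · obtain ⟨u, hu, hu1, hu2⟩ := hlim (z - x) (by linarith)
            have hcEx : cE W x ≤ u := cE_le hW hu (by linarith)
            calc sw W x t ≤ cE W x := sw_le x t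
            _ ≤ u := hcEx
            _ ≤ z := hu2
            _ < cE W z := hEz
          · have hnex : ¬ (W ∩ Set.Ioi x).Nonempty := by
              rintro ⟨u, hu, hux⟩
              exact hne ⟨u, hu, lt_of_le_of_lt hxz hux⟩
            have hEx : cE W x = x + 1 := cE_empty hnex
            have hSx : cS W x = z := by
              refine le_antisymm ?_ (hSz ▸ cS_mono hW hxz)
              obtain ⟨u₀, hu₀, _, hu₀2⟩ := hlim 1 one_pos
              have hnsx : (W ∩ Set.Iic x).Nonempty := ⟨u₀, hu₀, hu₀2.trans hxz⟩
              rw [cS_sSup hnsx]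
              apply csSup_le hnsx
              rintro u ⟨hu, hux⟩
              by_contra hc
              exact hne ⟨u, hu, not_le.1 hc⟩
            rw [sw, hEx, hSx, hE1]
            refine min_lt_iff.2 (Or.inl ?_)
            nlinarith [hx.1]
      · -- γ : gap below z, z ∉ W
        push_neg at hlim
        obtain ⟨δ₁, hδ₁, hgap⟩ := hlim
        -- hgap : ∀ u, u ∈ W → z - δ₁ < u → ¬ u ≤ z
        have hgap' : ∀ u ∈ W, u ≤ z → u ≤ z - δ₁ := by
          intro u hu huz
          by_contra hc
          have := hgap u hu (not_le.1 hc)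
          linarith
        -- set equalities near z
        have hsets : ∀ x : ℝ, |x - z| < min δ₁ (cE W z - z) →
            (W ∩ Set.Iic x = W ∩ Set.Iic z ∧ W ∩ Set.Ioi x = W ∩ Set.Ioi z) := by
          intro x hx
          rw [abs_sub_lt_iff] at hx
          have hx1 : x - z < min δ₁ (cE W z - z) := hx.1
          have hx2 : z - x < min δ₁ (cE W z - z) := hx.2
          have hxδ : z - δ₁ < x := by linarith [min_le_left δ₁ (cE W z - z)]
          have hxE : x < cE W z := by linarith [min_le_left δ₁ (cE W z - z), min_le_right δ₁ (cE W z - z)]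
          constructor
          · ext u
            simp only [mem_inter_iff, mem_Iic, and_congr_right_iff]
            intro hu
            constructor
            · intro hux
              by_contra hc
              have huz : z < u := not_le.1 hc
              exact absurd hux (not_le.2 (lt_of_lt_of_le hxE (cE_le hW hu huz)))
            · intro huz
              linarith [hgap' u hu huz]
          · ext u
            simp only [mem_inter_iff, mem_Ioi, and_congr_right_iff]
            intro hu
            constructor
            · intro hux
              rcases le_or_gt u z with h | h
              · linarith [hgap' u hu h]
              · exact h
            · intro huz
              linarith [cE_le hW hu huz]
        by_cases hne : (W ∩ Set.Ioi z).Nonempty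
        · by_cases hns : (W ∩ Set.Iic z).Nonempty
          · have hmarg : 0 < cE W z - (z + t * (cE W z - cS W z)) := by linarith
            have hδ : 0 < min (min δ₁ (cE W z - z))
                (cE W z - (z + t * (cE W z - cS W z))) :=
              lt_min (lt_min hδ₁ (by linarith)) hmarg
            filter_upwards [Metric.ball_mem_nhds z hδ] with x hx
            rw [Metric.mem_ball, Real.dist_eq] at hx
            obtain ⟨hIic, hIoi⟩ := hsets x (lt_of_lt_of_le hx (min_le_left _ _))
            have hEx : cE W x = cE W z := cE_congr hIoi hne
            have hSx : cS W x = cS W z := cS_congr hIic hns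
            rw [sw, hEx, hSx]
            refine min_lt_iff.2 (Or.inl ?_)
            have hx1 : x - z < cE W z - (z + t * (cE W z - cS W z)) := by
              have := le_abs_self (x - z)
              linarith [lt_of_lt_of_le hx (min_le_right _ _)]
            linarith
          · have hS1 : cS W z = z - 1 := cS_empty hns
            have hmarg : 0 < cE W z - z - t * (cE W z - z + 1) := by
              rw [hS1] at hlt; linarith
            have hδ : 0 < min (min δ₁ (cE W z - z)) (cE W z - z - t * (cE W z - z + 1)) :=
              lt_min (lt_min hδ₁ (by linarith)) hmarg
            filter_upwards [Metric.ball_mem_nhds z hδ] with x hx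
            rw [Metric.mem_ball, Real.dist_eq] at hx
            obtain ⟨hIic, hIoi⟩ := hsets x (lt_of_lt_of_le hx (min_le_left _ _))
            have hEx : cE W x = cE W z := cE_congr hIoi hne
            have hSx : cS W x = x - 1 := by
              apply cS_empty
              rw [hIic]
              exact hns
            rw [sw, hEx, hSx]
            refine min_lt_iff.2 (Or.inl ?_)
            have hx1 : x - z < cE W z - z - t * (cE W z - z + 1) := by
              have := le_abs_self (x - z)
              linarith [lt_of_lt_of_le hx (min_le_right _ _)]
            nlinarith
        · have hE1 : cE W z = z + 1 := cE_empty hne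
          by_cases hns : (W ∩ Set.Iic z).Nonempty
          · have hmarg : 0 < 1 - t * (z + 1 - cS W z) := by
              rw [hE1] at hlt; linarith
            have hδ : 0 < min (min δ₁ (cE W z - z)) ((1 - t * (z + 1 - cS W z)) / 2) :=
              lt_min (lt_min hδ₁ (by linarith)) (by linarith)
            filter_upwards [Metric.ball_mem_nhds z hδ] with x hx
            rw [Metric.mem_ball, Real.dist_eq] at hx
            obtain ⟨hIic, hIoi⟩ := hsets x (lt_of_lt_of_le hx (min_le_left _ _))
            have hEx : cE W x = x + 1 := by
              apply cE_empty
              rw [hIoi]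
              exact hne
            have hSx : cS W x = cS W z := cS_congr hIic hns
            rw [sw, hEx, hSx, hE1]
            refine min_lt_iff.2 (Or.inl ?_)
            have hx1 : x - z < (1 - t * (z + 1 - cS W z)) / 2 := by
              have := le_abs_self (x - z)
              linarith [lt_of_lt_of_le hx (min_le_right _ _)]
            nlinarith
          · have hS1 : cS W z = z - 1 := cS_empty hns
            have hmarg : 0 < 1 - 2 * t := by
              rw [hE1, hS1] at hlt; linarith
            have hδ : 0 < min (min δ₁ (cE W z - z)) (1 - 2 * t) :=
              lt_min (lt_min hδ₁ (by linarith)) hmarg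
            filter_upwards [Metric.ball_mem_nhds z hδ] with x hx
            rw [Metric.mem_ball, Real.dist_eq] at hx
            obtain ⟨hIic, hIoi⟩ := hsets x (lt_of_lt_of_le hx (min_le_left _ _))
            have hEx : cE W x = x + 1 := by
              apply cE_empty
              rw [hIoi]
              exact hne
            have hSx : cS W x = x - 1 := by
              apply cS_empty
              rw [hIic]
              exact hns
            rw [sw, hEx, hSx, hE1]
            refine min_lt_iff.2 (Or.inl ?_)
            have hx1 : x - z < 1 - 2 * t := by
              have := le_abs_self (x - z)
              linarith [lt_of_lt_of_le hx (min_le_right _ _)]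
            nlinarith
noncomputable def Gex {n : ℕ} (W : Set ℝ) (g₀ : (Fin n → ℝ) → ℝ) (c : ℝ)
    (y : Fin n → ℝ) : ℝ :=
  sSup (insert c (g₀ '' {v | (∀ i, v i ∈ W) ∧ ∀ i, v i ≤ y i}))

section Gsec

variable {n : ℕ} {g₀ : (Fin n → ℝ) → ℝ} {m : ℝ}

lemma Gex_bdd (hbdd : ∀ B : Set (Fin n → ℝ), Bornology.IsBounded B →
      ∃ C : ℝ, ∀ x ∈ B, (∀ i, x i ∈ W) → |g₀ x| ≤ C)
    (hm : IsLeast W m) (y : Fin n → ℝ) :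
    BddAbove (insert (g₀ fun _ => m) (g₀ '' {v | (∀ i, v i ∈ W) ∧ ∀ i, v i ≤ y i})) := by
  obtain ⟨C, hC⟩ := hbdd (Metric.closedBall 0 (‖y‖ + |m|)) Metric.isBounded_closedBall
  refine ⟨max C (g₀ fun _ => m), ?_⟩
  rintro r (rfl | ⟨v, ⟨hv, hle⟩, rfl⟩)
  · exact le_max_right _ _
  · refine le_max_of_le_left ?_
    have hvb : v ∈ Metric.closedBall (0 : Fin n → ℝ) (‖y‖ + |m|) := by
      rw [Metric.mem_closedBall, dist_zero_right]
      refine (pi_norm_le_iff_of_nonneg (by positivity)).2 fun i => ?_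
      rw [Real.norm_eq_abs, abs_le]
      constructor
      · have h1 := hm.2 (hv i)
        linarith [norm_nonneg y, neg_abs_le m]
      · have h1 : v i ≤ y i := hle i
        have h2 : y i ≤ |y i| := le_abs_self _
        have h3 : ‖y i‖ ≤ ‖y‖ := norm_le_pi_norm y i
        rw [Real.norm_eq_abs] at h3
        linarith [abs_nonneg m]
    exact le_trans (le_abs_self _) (hC v hvb hv)

lemma Gex_le_Gex (hbdd : ∀ B : Set (Fin n → ℝ), Bornology.IsBounded B →
      ∃ C : ℝ, ∀ x ∈ B, (∀ i, x i ∈ W) → |g₀ x| ≤ C)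
    (hm : IsLeast W m) {y₁ y₂ : Fin n → ℝ}
    (h : ∀ i, ∀ v ∈ W, v ≤ y₁ i → v ≤ y₂ i) :
    Gex W g₀ (g₀ fun _ => m) y₁ ≤ Gex W g₀ (g₀ fun _ => m) y₂ :=
  csSup_le_csSup (Gex_bdd hbdd hm y₂) (insert_nonempty _ _)
    (insert_subset_insert (image_mono
      (fun v hv => ⟨hv.1, fun i => h i _ (hv.1 i) (hv.2 i)⟩)))

lemma Gex_ge_c (hbdd : ∀ B : Set (Fin n → ℝ), Bornology.IsBounded B →
      ∃ C : ℝ, ∀ x ∈ B, (∀ i, x i ∈ W) → |g₀ x| ≤ C)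
    (hm : IsLeast W m) (y : Fin n → ℝ) :
    (g₀ fun _ => m) ≤ Gex W g₀ (g₀ fun _ => m) y :=
  le_csSup (Gex_bdd hbdd hm y) (mem_insert _ _)

lemma Gex_ge_elem (hbdd : ∀ B : Set (Fin n → ℝ), Bornology.IsBounded B →
      ∃ C : ℝ, ∀ x ∈ B, (∀ i, x i ∈ W) → |g₀ x| ≤ C)
    (hm : IsLeast W m) {v y : Fin n → ℝ} (hv : ∀ i, v i ∈ W) (hle : ∀ i, v i ≤ y i) :
    g₀ v ≤ Gex W g₀ (g₀ fun _ => m) y :=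
  le_csSup (Gex_bdd hbdd hm y) (mem_insert_of_mem _ ⟨v, ⟨hv, hle⟩, rfl⟩)

lemma Gex_node (hmono : ∀ x y : Fin n → ℝ, (∀ i, x i ∈ W) → (∀ i, y i ∈ W) →
      x ≤ y → g₀ x ≤ g₀ y)
    (hm : IsLeast W m) {x y : Fin n → ℝ} (hx : ∀ i, x i ∈ W)
    (hiff : ∀ i, ∀ v ∈ W, (v ≤ y i ↔ v ≤ x i)) :
    Gex W g₀ (g₀ fun _ => m) y = g₀ x := by
  apply IsGreatest.csSup_eq
  constructor
  · exact mem_insert_of_mem _ ⟨x, ⟨hx, fun i => (hiff i _ (hx i)).2 le_rfl⟩, rfl⟩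
  · rintro r (rfl | ⟨v, ⟨hv, hle⟩, rfl⟩)
    · exact hmono _ _ (fun _ => hm.1) hx (fun i => hm.2 (hx i))
    · exact hmono v x hv hx (fun i => (hiff i _ (hv i)).1 (hle i))

end Gsec

/-- Continuous monotone extension: if `W ⊆ ℝ` is well-ordered and contains
none of its limit points, and `g₀` is nondecreasing on `Wⁿ` and bounded on
precompact sets, then `g₀` extends to a continuous nondecreasing function
`g : ℝⁿ → ℝ`. -/
theorem continuous_monotone_extension (n : ℕ) (W : Set ℝ)
    (hW : W.WellFoundedOn (· < ·))
    (hWlim : ∀ p : ℝ, p ∈ closure (W \ {p}) → p ∉ W)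
    (g₀ : (Fin n → ℝ) → ℝ)
    (hmono : ∀ x y : Fin n → ℝ, (∀ i, x i ∈ W) → (∀ i, y i ∈ W) →
      x ≤ y → g₀ x ≤ g₀ y)
    (hbdd : ∀ B : Set (Fin n → ℝ), Bornology.IsBounded B →
      ∃ C : ℝ, ∀ x ∈ B, (∀ i, x i ∈ W) → |g₀ x| ≤ C) :
    ∃ g : (Fin n → ℝ) → ℝ, Continuous g ∧ Monotone g ∧
      ∀ x : Fin n → ℝ, (∀ i, x i ∈ W) → g x = g₀ x := by
  have hW' : W.IsWF := hW
  by_cases hWe : W.Nonempty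
  swap
  · -- W is empty
    rcases n with _ | n'
    · refine ⟨fun _ => g₀ (fun _ => 0), continuous_const, monotone_const, fun x _ => ?_⟩
      show g₀ (fun _ => (0:ℝ)) = g₀ x
      congr 1
      funext i
      exact i.elim0
    · exact ⟨fun _ => 0, continuous_const, monotone_const,
        fun x hx => absurd (hx 0) (fun h => hWe ⟨_, h⟩)⟩
  · obtain ⟨m, hm⟩ : ∃ m, IsLeast W m :=
      ⟨hW'.min hWe, hW'.min_mem hWe, fun b hb => hW'.min_le hWe hb⟩
    refine ⟨fun x => ∫ t in (0:ℝ)..1,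
      Gex W g₀ (g₀ fun _ => m) (fun i => sw W (x i) t), ?_, ?_, ?_⟩
    · -- Continuity
      rw [continuous_iff_continuousAt]
      intro x₀
      apply intervalIntegral.continuousAt_of_dominated_interval
        (bound := fun _ => max |Gex W g₀ (g₀ fun _ => m) (fun i => x₀ i - 1)|
          |Gex W g₀ (g₀ fun _ => m) (fun i => cE W (x₀ i + 1))|)
      · refine Eventually.of_forall (fun x => ?_)
        have hmt : Monotone (fun t => Gex W g₀ (g₀ fun _ => m) (fun i => sw W (x i) t)) :=
          fun t₁ t₂ ht => Gex_le_Gex hbdd hm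
            (fun i v _ hvle => hvle.trans (sw_mono_t hW' (x i) ht))
        exact hmt.measurable.aestronglyMeasurable
      · filter_upwards [Metric.ball_mem_nhds x₀ one_pos] with x hx
        refine Eventually.of_forall (fun t ht => ?_)
        rw [uIoc_of_le zero_le_one] at ht
        have hxi : ∀ i, |x i - x₀ i| < 1 := by
          intro i
          have h1 : dist (x i) (x₀ i) ≤ dist x x₀ := dist_le_pi_dist x x₀ i
          rw [Real.dist_eq] at h1
          exact lt_of_le_of_lt h1 (Metric.mem_ball.1 hx)
        have hlow : Gex W g₀ (g₀ fun _ => m) (fun i => x₀ i - 1) ≤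
            Gex W g₀ (g₀ fun _ => m) (fun i => sw W (x i) t) := by
          refine Gex_le_Gex hbdd hm (fun i v _ hvle => ?_)
          have := hxi i
          have h2 : x₀ i - 1 ≤ x i := by
            rw [abs_sub_lt_iff] at this; linarith [this.2]
          exact le_trans hvle (le_trans h2 (sw_ge hW' ht.1.le))
        have hhigh : Gex W g₀ (g₀ fun _ => m) (fun i => sw W (x i) t) ≤
            Gex W g₀ (g₀ fun _ => m) (fun i => cE W (x₀ i + 1)) := by
          refine Gex_le_Gex hbdd hm (fun i v _ hvle => ?_)
          have := hxi i
          have h2 : x i ≤ x₀ i + 1 := by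
            rw [abs_sub_lt_iff] at this; linarith [this.1]
          exact le_trans hvle (le_trans (sw_le _ _) (cE_mono hW' h2))
        rw [Real.norm_eq_abs, abs_le]
        constructor
        · have := neg_abs_le (Gex W g₀ (g₀ fun _ => m) (fun i => x₀ i - 1))
          have h9 := le_max_left |Gex W g₀ (g₀ fun _ => m) (fun i => x₀ i - 1)|
            |Gex W g₀ (g₀ fun _ => m) (fun i => cE W (x₀ i + 1))|
          linarith
        · have := le_abs_self (Gex W g₀ (g₀ fun _ => m) (fun i => cE W (x₀ i + 1)))
          have h9 := le_max_right |Gex W g₀ (g₀ fun _ => m) (fun i => x₀ i - 1)|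
            |Gex W g₀ (g₀ fun _ => m) (fun i => cE W (x₀ i + 1))|
          linarith
      · exact intervalIntegrable_const
      · -- a.e. continuity in the parameter
        rw [ae_iff]
        refine measure_mono_null ?_ (?_ :
          volume ({(1:ℝ)} ∪ ⋃ i : Fin n,
            {t : ℝ | x₀ i + t * (cE W (x₀ i) - cS W (x₀ i)) = cE W (x₀ i)}) = 0)
        · intro t ht
          simp only [mem_setOf_eq, not_forall] at ht
          obtain ⟨htI, hnc⟩ := ht
          rw [uIoc_of_le zero_le_one] at htI
          by_contra htB
          simp only [mem_union, mem_singleton_iff, mem_iUnion, mem_setOf_eq, not_or,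
            not_exists] at htB
          obtain ⟨ht1, htau⟩ := htB
          have ht0' : 0 < t := htI.1
          have ht1' : t < 1 := lt_of_le_of_ne htI.2 ht1
          apply hnc
          refine tendsto_order.2 ⟨?_, ?_⟩
          · intro b hb
            obtain ⟨r, hr, hbr⟩ := exists_lt_of_lt_csSup (insert_nonempty _ _) hb
            rcases hr with rfl | ⟨v, ⟨hv, hle⟩, rfl⟩
            · exact Eventually.of_forall (fun x => lt_of_lt_of_le hbr (Gex_ge_c hbdd hm _))
            · have hev : ∀ᶠ x : Fin n → ℝ in 𝓝 x₀, ∀ i, v i ≤ sw W (x i) t := by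
                refine eventually_all.2 (fun i => ?_)
                exact ((continuous_apply i).tendsto x₀).eventually
                  (L_sw hW' hWlim ht0' ht1' (htau i) (hv i) (hle i))
              filter_upwards [hev] with x hx
              exact lt_of_lt_of_le hbr (Gex_ge_elem hbdd hm hv hx)
          · intro b hb
            have hev : ∀ᶠ x : Fin n → ℝ in 𝓝 x₀,
                ∀ i, ∀ v ∈ W, v ≤ sw W (x i) t → v ≤ sw W (x₀ i) t := by
              refine eventually_all.2 (fun i => ?_)
              exact ((continuous_apply i).tendsto x₀).eventually
                (U_sw hW' hWlim ht0' ht1' (htau i))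
            filter_upwards [hev] with x hx
            exact lt_of_le_of_lt (Gex_le_Gex hbdd hm hx) hb
        · refine measure_union_null Real.volume_singleton ?_
          refine measure_iUnion_null (fun i => ?_)
          refine measure_mono_null (?_ : _ ⊆
            ({(cE W (x₀ i) - x₀ i) / (cE W (x₀ i) - cS W (x₀ i))} : Set ℝ)) Real.volume_singleton
          intro t ht
          have hne : cE W (x₀ i) - cS W (x₀ i) ≠ 0 := by
            have := cS_lt_cE hW' (x₀ i); linarith
          simp only [mem_setOf_eq] at ht
          simp only [mem_singleton_iff]
          field_simp
          linarith [ht]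
    · -- Monotone
      intro x₁ x₂ h
      have hmt1 : Monotone (fun t => Gex W g₀ (g₀ fun _ => m) (fun i => sw W (x₁ i) t)) :=
        fun t₁ t₂ ht => Gex_le_Gex hbdd hm
          (fun i v _ hvle => hvle.trans (sw_mono_t hW' (x₁ i) ht))
      have hmt2 : Monotone (fun t => Gex W g₀ (g₀ fun _ => m) (fun i => sw W (x₂ i) t)) :=
        fun t₁ t₂ ht => Gex_le_Gex hbdd hm
          (fun i v _ hvle => hvle.trans (sw_mono_t hW' (x₂ i) ht))
      refine intervalIntegral.integral_mono_on zero_le_one ?_ ?_ (fun t ht => ?_)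
      · exact (hmt1.monotoneOn _).intervalIntegrable
      · exact (hmt2.monotoneOn _).intervalIntegrable
      · exact Gex_le_Gex hbdd hm
          (fun i v _ hvle => hvle.trans (sw_mono_x hW' ht.1 ht.2 (h i)))
    · -- Agreement on Wⁿ
      intro x hx
      have hval : ∀ t : ℝ, 0 ≤ t → t < 1 →
          Gex W g₀ (g₀ fun _ => m) (fun i => sw W (x i) t) = g₀ x := by
        intro t h0 h1
        exact Gex_node hmono hm hx (fun i v hv =>
          le_iff_of_lt_cE hW' hv (sw_ge hW' h0) (sw_node_lt hW' (hx i) h1))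
      have : (∫ t in (0:ℝ)..1,
          Gex W g₀ (g₀ fun _ => m) (fun i => sw W (x i) t)) = ∫ _ in (0:ℝ)..1, g₀ x := by
        apply intervalIntegral.integral_congr_ae
        rw [ae_iff]
        refine measure_mono_null (?_ : _ ⊆ ({(1:ℝ)} : Set ℝ)) Real.volume_singleton
        intro t ht
        simp only [mem_setOf_eq, not_forall] at ht
        obtain ⟨htI, hne⟩ := ht
        rw [uIoc_of_le zero_le_one] at htI
        by_contra ht1
        exact hne (hval t htI.1.le (lt_of_le_of_ne htI.2 ht1))
      refine this.trans ?_
      rw [intervalIntegral.integral_const]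
      simp
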